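/- Let S be a closed symmetric operator with non-dense domain in a complex Hilbert space H, fix λ ∈ ℂ with Im λ > 0, and set L := (closure(dom S))^⊥, N_λ := (ran(S − λ̄I))^⊥, N_{λ̄} := (ran(S − λI))^⊥, and for nonreal z, N_z := (ran(S − z̄I))^⊥. Fix h ∈ L and ε > 0, and let (z_n) be a sequence in the open upper half-plane with |z_n| → ∞ and Im z_n ≥ ε|z_n| for all n. Suppose for each n there exist f_n ∈ dom S and φ_n ∈ N_{z_n} with (S − λ̄I)f_n + (z_n − λ̄)φ_n = P_{N_λ}h. Then (S − λI)f_n + (z_n − λ)φ_n → P_{N_{λ̄}}h in H. (This expresses the nontangential limit lim_{z→∞, z∈ℂ₊} C_λ^S(z)f = V_λ f for f ∈ P_{N_λ}L, where C_λ^S(z) := (S̃_z − λI)(S̃_z − λ̄I)^{-1}↾N_λ is the characteristic function of S built from the Shtraus extensions S̃_z and V_λ(P_{N_λ}h) = P_{N_{λ̄}}h.) -/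

import Mathlib

set_option synthInstance.maxHeartbeats 1000000

open scoped ComplexInnerProductSpace

variable {H : Type*} [NormedAddCommGroup H] [InnerProductSpace ℂ H] [CompleteSpace H]

/-- The deficiency subspace `N_λ = (ran (S - λ̄ I))ᗮ` of an operator `S`; in particular
`defSubspace S z = N_z` and `defSubspace S (conj λ) = N_λ̄`. -/
noncomputable abbrev defSubspace (S : H →ₗ.[ℂ] H) (lam : ℂ) : Submodule ℂ H :=
  (LinearMap.range (S.toFun - (starRingEnd ℂ lam) • S.domain.subtype))ᗮ

set_option linter.unusedSectionVars false
set_option maxHeartbeats 1000000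

/-- inner relation for deficiency vectors -/
lemma defSubspace_inner {S : H →ₗ.[ℂ] H} {zz : ℂ} {p : H}
    (hp : p ∈ defSubspace S zz) (u : S.domain) :
    ⟪S u, p⟫ = zz * ⟪(u : H), p⟫ := by
  have h0 : ⟪S u - (starRingEnd ℂ zz) • (u : H), p⟫ = 0 := by
    refine hp _ ?_
    exact ⟨u, rfl⟩
  rw [inner_sub_left, inner_smul_left, sub_eq_zero] at h0
  simpa using h0

lemma symm_real {S : H →ₗ.[ℂ] H}
    (hsym : ∀ x y : S.domain, ⟪S x, (y : H)⟫ = ⟪(x : H), S y⟫)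
    (u : S.domain) : (starRingEnd ℂ) ⟪(u : H), S u⟫ = ⟪(u : H), S u⟫ := by
  rw [inner_conj_symm, hsym u u]

set_option linter.unusedSectionVars false

lemma lower_bound {S : H →ₗ.[ℂ] H}
    (hsym : ∀ x y : S.domain, ⟪S x, (y : H)⟫ = ⟪(x : H), S y⟫)
    {lam : ℂ} (hlam : 0 < lam.im) (u : S.domain) :
    lam.im * ‖(u : H)‖ ≤ ‖S u - (starRingEnd ℂ lam) • (u : H)‖ := by
  have him : (⟪(u : H), S u - (starRingEnd ℂ lam) • (u : H)⟫).im = lam.im * ‖(u : H)‖ ^ 2 := by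
    rw [inner_sub_right, inner_smul_right, inner_self_eq_norm_sq_to_K]
    have hre : (⟪(u : H), S u⟫).im = 0 := by
      have := symm_real hsym u
      rw [Complex.conj_eq_iff_im] at this
      exact this
    simp [Complex.sub_im, Complex.mul_im, hre, Complex.conj_im, Complex.conj_re,
      ← Complex.ofReal_pow]
  have hb : lam.im * ‖(u : H)‖ ^ 2 ≤ ‖(u : H)‖ * ‖S u - (starRingEnd ℂ lam) • (u : H)‖ := by
    rw [← him]
    calc (⟪(u : H), S u - (starRingEnd ℂ lam) • (u : H)⟫).im
        ≤ ‖⟪(u : H), S u - (starRingEnd ℂ lam) • (u : H)⟫‖ := by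
          exact (Complex.abs_im_le_norm _).trans' (le_abs_self _)
      _ ≤ _ := norm_inner_le_norm _ _
  rcases eq_or_lt_of_le (norm_nonneg (u : H)) with h0 | h0
  · simp [← h0]
  · nlinarith [norm_nonneg (S u - (starRingEnd ℂ lam) • (u : H))]

lemma key_identity {S : H →ₗ.[ℂ] H}
    (hsym : ∀ x y : S.domain, ⟪S x, (y : H)⟫ = ⟪(x : H), S y⟫)
    {lam zz : ℂ} {p : H} (hp : p ∈ defSubspace S zz) (u : S.domain) :
    (⟪(u : H) + p, S u - (starRingEnd ℂ lam) • (u : H) + (zz - starRingEnd ℂ lam) • p⟫).im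
      = lam.im * ‖(u : H) + p‖ ^ 2 + zz.im * ‖p‖ ^ 2 := by
  have e2 : ⟪p, S u⟫ = (starRingEnd ℂ zz) * (starRingEnd ℂ) ⟪(u : H), p⟫ := by
    rw [← inner_conj_symm, defSubspace_inner hp u, map_mul]
  have e3 : ⟪p, (u : H)⟫ = (starRingEnd ℂ) ⟪(u : H), p⟫ := by
    rw [← inner_conj_symm]
  have eA : (⟪(u : H), S u⟫).im = 0 := by
    have := symm_real hsym u
    rwa [Complex.conj_eq_iff_im] at this
  have hnorm : ‖(u : H) + p‖ ^ 2 = ‖(u : H)‖ ^ 2 + 2 * (⟪(u : H), p⟫).re + ‖p‖ ^ 2 := by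
    rw [@norm_add_sq ℂ]
    norm_num
  have hself : ∀ x : H, (⟪x, x⟫ : ℂ) = ((‖x‖ ^ 2 : ℝ) : ℂ) := fun x => by
    rw [inner_self_eq_norm_sq_to_K]; norm_num
  rw [hnorm]
  simp only [inner_add_left, inner_add_right, inner_sub_right, inner_smul_right,
    hself, e2, e3]
  simp only [Complex.add_im, Complex.sub_im, Complex.add_re, Complex.sub_re,
    Complex.mul_im, Complex.mul_re, Complex.conj_re, Complex.conj_im,
    Complex.ofReal_re, Complex.ofReal_im, eA]
  ring

lemma exists_preimage {S : H →ₗ.[ℂ] H}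
    (hsym : ∀ x y : S.domain, ⟪S x, (y : H)⟫ = ⟪(x : H), S y⟫)
    (hclosed : S.IsClosed) {lam : ℂ} (hlam : 0 < lam.im) (h : H) :
    ∃ g : S.domain, h - (Submodule.orthogonalProjection (defSubspace S lam) h : H)
      = S g - (starRingEnd ℂ lam) • (g : H) := by
  set T := S.toFun - (starRingEnd ℂ lam) • S.domain.subtype with hT
  set y := h - (Submodule.orthogonalProjection (defSubspace S lam) h : H) with hy
  have low : ∀ x : S.domain, lam.im * ‖(x : H)‖ ≤ ‖T x‖ := fun x => by
    simpa [hT, LinearPMap.toFun_eq_coe, LinearMap.sub_apply, LinearMap.smul_apply]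
      using lower_bound hsym hlam x
  have hmem : y ∈ (LinearMap.range T)ᗮᗮ := Submodule.sub_starProjection_mem_orthogonal (K := defSubspace S lam) h
  rw [Submodule.orthogonal_orthogonal_eq_closure] at hmem
  have hclos : y ∈ closure ((LinearMap.range T : Submodule ℂ H) : Set H) := by
    rw [← Submodule.topologicalClosure_coe]
    exact hmem
  obtain ⟨v, hvmem, hvlim⟩ := mem_closure_iff_seq_limit.1 hclos
  choose w hw using hvmem
  have hvC : CauchySeq v := hvlim.cauchySeq
  have hwC : CauchySeq (fun k => ((w k : H))) := by
    rw [Metric.cauchySeq_iff] at hvC ⊢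
    intro ε' hε'
    obtain ⟨N, hN⟩ := hvC (lam.im * ε') (by positivity)
    refine ⟨N, fun m hm n hn => ?_⟩
    have h1 := hN m hm n hn
    have h2 := low (w m - w n)
    rw [map_sub, hw m, hw n] at h2
    rw [dist_eq_norm] at h1 ⊢
    have hco : ((w m - w n : S.domain) : H) = (w m : H) - w n := rfl
    rw [hco] at h2
    have := lt_of_le_of_lt h2 h1
    exact (mul_lt_mul_iff_right₀ hlam).1 this
  obtain ⟨x, hx⟩ := cauchySeq_tendsto_of_complete hwC
  have hSv : ∀ k, S (w k) = v k + (starRingEnd ℂ lam) • (w k : H) := fun k => by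
    rw [← hw k]
    simp [hT, LinearPMap.toFun_eq_coe, LinearMap.sub_apply, LinearMap.smul_apply]
  have hSlim : Filter.Tendsto (fun k => S (w k)) Filter.atTop
      (nhds (y + (starRingEnd ℂ lam) • x)) := by
    simp only [hSv]
    exact hvlim.add (hx.const_smul _)
  have hpair : Filter.Tendsto (fun k => (((w k : H)), S (w k))) Filter.atTop
      (nhds (x, y + (starRingEnd ℂ lam) • x)) := hx.prodMk_nhds hSlim
  have hgr : (x, y + (starRingEnd ℂ lam) • x) ∈ S.graph := by
    refine hclosed.mem_of_tendsto hpair ?_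
    exact Filter.Eventually.of_forall fun k => S.mem_graph (w k)
  rw [LinearPMap.mem_graph_iff] at hgr
  obtain ⟨g, hg1, hg2⟩ := hgr
  refine ⟨g, ?_⟩
  show y = S g - (starRingEnd ℂ lam) • (g : H)
  rw [hg2, hg1]
  simp

lemma proj_conj {S : H →ₗ.[ℂ] H}
    (hsym : ∀ x y : S.domain, ⟪S x, (y : H)⟫ = ⟪(x : H), S y⟫)
    {lam : ℂ} {h : H} (hh : h ∈ S.domainᗮ)
    {g : S.domain}
    (hg : h - (Submodule.orthogonalProjection (defSubspace S lam) h : H)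
      = S g - (starRingEnd ℂ lam) • (g : H)) :
    (Submodule.orthogonalProjection (defSubspace S (starRingEnd ℂ lam)) h : H)
      = (Submodule.orthogonalProjection (defSubspace S lam) h : H)
        + (lam - starRingEnd ℂ lam) • (g : H) := by
  have hSg : (S g : H) = h - (Submodule.orthogonalProjection (defSubspace S lam) h : H)
      + (starRingEnd ℂ lam) • (g : H) := by
    rw [hg]; abel
  rw [← Submodule.starProjection_apply]
  apply Submodule.eq_starProjection_of_mem_orthogonal'
    (z := S g - lam • (g : H))
  · -- v ∈ (range (S - lam))ᗮ
    rw [Submodule.mem_orthogonal]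
    rintro m ⟨d, rfl⟩
    simp only [LinearMap.sub_apply, LinearMap.smul_apply, Submodule.coe_subtype,
      LinearPMap.toFun_eq_coe, Complex.conj_conj]
    have e1 : ⟪S d, (Submodule.orthogonalProjection (defSubspace S lam) h : H)⟫
        = lam * ⟪(d : H), (Submodule.orthogonalProjection (defSubspace S lam) h : H)⟫ :=
      defSubspace_inner (Submodule.coe_mem _) d
    have hdh : ⟪(d : H), h⟫ = 0 := hh (d : H) d.2
    have e3 : ⟪(d : H), (S g : H)⟫
        = - ⟪(d : H), (Submodule.orthogonalProjection (defSubspace S lam) h : H)⟫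
          + (starRingEnd ℂ lam) * ⟪(d : H), (g : H)⟫ := by
      rw [hSg, inner_add_right, inner_sub_right, inner_smul_right, hdh]
      ring
    rw [inner_sub_left, inner_smul_left, inner_add_right, inner_add_right,
      inner_smul_right, inner_smul_right, e1, hsym d g, e3]
    ring
  · -- z ∈ ((range (S - lam))ᗮ)ᗮ
    apply Submodule.le_orthogonal_orthogonal
    refine ⟨g, ?_⟩
    simp only [LinearMap.sub_apply, LinearMap.smul_apply, Submodule.coe_subtype,
      LinearPMap.toFun_eq_coe, Complex.conj_conj]
  · -- h = v + z
    rw [hSg]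
    module


/-- Let `S` be a closed symmetric operator with non-dense domain,
`L = (closure (dom S))ᗮ`, `Im λ > 0`, `h ∈ L`, `ε > 0`, and let `(z_n) ⊆ ℂ₊` with
`|z_n| → ∞` and `Im z_n ≥ ε |z_n|`.  If `f_n ∈ dom S` and `φ_n ∈ N_{z_n}` satisfy
`(S - λ̄ I) f_n + (z_n - λ̄) φ_n = P_{N_λ} h`, then
`(S - λ I) f_n + (z_n - λ) φ_n → P_{N_λ̄} h`.  (This is the nontangential limit
`lim_{z→∞} C_λ^S(z) f = V_λ f` for `f ∈ P_{N_λ} L` of the characteristic function of `S`.) -/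
theorem tendsto_characteristicFunction_to_Vlambda
    (S : H →ₗ.[ℂ] H)
    (hsym : ∀ x y : S.domain, ⟪S x, (y : H)⟫ = ⟪(x : H), S y⟫)
    (hclosed : S.IsClosed)
    (hnd : ¬ Dense (S.domain : Set H))
    (lam : ℂ) (hlam : 0 < lam.im)
    (h : H) (hh : h ∈ S.domainᗮ)
    (ε : ℝ) (hε : 0 < ε)
    (z : ℕ → ℂ) (hupper : ∀ n, 0 < (z n).im)
    (habs : Filter.Tendsto (fun n => ‖z n‖) Filter.atTop Filter.atTop)
    (hnontang : ∀ n, ε * ‖z n‖ ≤ (z n).im)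
    (f : ℕ → H) (hf : ∀ n, f n ∈ S.domain)
    (φ : ℕ → H) (hφ : ∀ n, φ n ∈ defSubspace S (z n))
    (heq : ∀ n, (S ⟨f n, hf n⟩ - (starRingEnd ℂ lam) • f n) +
        (z n - starRingEnd ℂ lam) • φ n =
      (Submodule.orthogonalProjection (defSubspace S lam) h : H)) :
    Filter.Tendsto
      (fun n => (S ⟨f n, hf n⟩ - lam • f n) + (z n - lam) • φ n)
      Filter.atTop
      (nhds ((Submodule.orthogonalProjection (defSubspace S (starRingEnd ℂ lam)) h : H))) := by
  obtain ⟨g, hg⟩ := exists_preimage hsym hclosed hlam h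
  have hproj := proj_conj hsym hh hg
  set u : ℕ → S.domain := fun n => ⟨f n, hf n⟩ + g with hu
  set x : ℕ → H := fun n => (u n : H) + φ n with hx
  have hucoe : ∀ n, (u n : H) = f n + (g : H) := fun n => rfl
  -- the fundamental equation (S - λ̄)(u n) + (z n - λ̄) φ n = h
  have hw : ∀ n, S (u n) - (starRingEnd ℂ lam) • ((u n : H))
      + (z n - starRingEnd ℂ lam) • φ n = h := by
    intro n
    have e := heq n
    calc S (u n) - (starRingEnd ℂ lam) • ((u n : H)) + (z n - starRingEnd ℂ lam) • φ n
        = (S ⟨f n, hf n⟩ - (starRingEnd ℂ lam) • f n + (z n - starRingEnd ℂ lam) • φ n)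
          + (S g - (starRingEnd ℂ lam) • (g : H)) := by
          rw [hu]
          simp only [LinearPMap.map_add, Submodule.coe_add, hucoe]
          module
      _ = (Submodule.orthogonalProjection (defSubspace S lam) h : H)
          + (h - (Submodule.orthogonalProjection (defSubspace S lam) h : H)) := by rw [e, ← hg]
      _ = h := by abel
  -- key imaginary part identity
  have him : ∀ n, (⟪x n, h⟫).im = lam.im * ‖x n‖ ^ 2 + (z n).im * ‖φ n‖ ^ 2 := by
    intro n
    conv_lhs => rw [hx, ← hw n]
    exact key_identity hsym (hφ n) (u n)
  have hb1 : ∀ (v : H), (⟪v, h⟫).im ≤ ‖v‖ * ‖h‖ := by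
    intro v
    calc (⟪v, h⟫).im ≤ |(⟪v, h⟫).im| := le_abs_self _
      _ ≤ ‖⟪v, h⟫‖ := Complex.abs_im_le_norm _
      _ ≤ ‖v‖ * ‖h‖ := norm_inner_le_norm _ _
  -- bound on ‖x n‖
  have hxb : ∀ n, lam.im * ‖x n‖ ≤ ‖h‖ := by
    intro n
    have h1 := him n
    have h2 := hb1 (x n)
    have hz0 : 0 ≤ (z n).im * ‖φ n‖ ^ 2 :=
      mul_nonneg (hupper n).le (sq_nonneg _)
    rcases eq_or_lt_of_le (norm_nonneg (x n)) with h0 | h0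
    · rw [← h0, mul_zero]; exact norm_nonneg h
    · nlinarith
  -- bound on ‖φ n‖²
  have hφb : ∀ n, ‖φ n‖ ^ 2 ≤ (‖h‖ * ‖h‖ / lam.im) / (z n).im := by
    intro n
    have h1 := him n
    have h2 := hb1 (x n)
    have h3 := hxb n
    have s2 : lam.im * ((z n).im * ‖φ n‖ ^ 2) ≤ ‖h‖ * ‖h‖ := by
      have h1' := congrArg (fun t => lam.im * t) h1
      have h4 := mul_le_mul_of_nonneg_left h2 hlam.le
      have h5 := mul_le_mul_of_nonneg_right h3 (norm_nonneg h)
      nlinarith [mul_nonneg (mul_nonneg hlam.le hlam.le) (sq_nonneg (‖x n‖))]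
    rw [le_div_iff₀ (hupper n), le_div_iff₀ hlam]
    nlinarith
  -- Im (z n) → ∞
  have hzim : Filter.Tendsto (fun n => (z n).im) Filter.atTop Filter.atTop := by
    refine Filter.tendsto_atTop_mono hnontang ?_
    exact (habs.const_mul_atTop hε)
  have hφ2 : Filter.Tendsto (fun n => ‖φ n‖ ^ 2) Filter.atTop (nhds 0) :=
    squeeze_zero (fun n => sq_nonneg _) hφb (Filter.Tendsto.div_atTop tendsto_const_nhds hzim)
  have hφ0 : Filter.Tendsto (fun n => ‖φ n‖) Filter.atTop (nhds 0) := by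
    have hc := (Real.continuous_sqrt.tendsto 0).comp hφ2
    rw [Real.sqrt_zero] at hc
    exact hc.congr fun n => Real.sqrt_sq (norm_nonneg _)
  -- ‖x n‖ → 0
  have hxh : ∀ n, (⟪x n, h⟫).im = (⟪φ n, h⟫).im := by
    intro n
    rw [hx]
    simp only [inner_add_left]
    rw [(Submodule.mem_orthogonal _ _).1 hh ((u n : H)) (u n).2, zero_add]
  have hxsq : ∀ n, ‖x n‖ ^ 2 ≤ (‖φ n‖ * ‖h‖) / lam.im := by
    intro n
    have h1 := him n
    have h2 := hb1 (φ n)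
    have hz0 : 0 ≤ (z n).im * ‖φ n‖ ^ 2 :=
      mul_nonneg (hupper n).le (sq_nonneg _)
    rw [le_div_iff₀ hlam]
    nlinarith [hxh n]
  have hx2 : Filter.Tendsto (fun n => ‖x n‖ ^ 2) Filter.atTop (nhds 0) := by
    refine squeeze_zero (fun n => sq_nonneg _) hxsq ?_
    have := (hφ0.mul_const ‖h‖).div_const lam.im
    simpa using this
  have hx0 : Filter.Tendsto (fun n => ‖x n‖) Filter.atTop (nhds 0) := by
    have hc := (Real.continuous_sqrt.tendsto 0).comp hx2
    rw [Real.sqrt_zero] at hc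
    exact hc.congr fun n => Real.sqrt_sq (norm_nonneg _)
  have hxt : Filter.Tendsto x Filter.atTop (nhds 0) :=
    tendsto_zero_iff_norm_tendsto_zero.2 hx0
  -- rewrite the sequence
  have keyfun : ∀ n, (S ⟨f n, hf n⟩ - lam • f n) + (z n - lam) • φ n
      = (Submodule.orthogonalProjection (defSubspace S (starRingEnd ℂ lam)) h : H)
        + ((starRingEnd ℂ lam) - lam) • x n := by
    intro n
    rw [hproj]
    have e := heq n
    have eS : S ⟨f n, hf n⟩ = (Submodule.orthogonalProjection (defSubspace S lam) h : H)
        - (z n - starRingEnd ℂ lam) • φ n + (starRingEnd ℂ lam) • f n := by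
      rw [← e]; module
    rw [eS]
    simp only [hx, hucoe]
    module
  have final : Filter.Tendsto
      (fun n => (Submodule.orthogonalProjection (defSubspace S (starRingEnd ℂ lam)) h : H)
        + ((starRingEnd ℂ lam) - lam) • x n) Filter.atTop
      (nhds ((Submodule.orthogonalProjection (defSubspace S (starRingEnd ℂ lam)) h : H))) := by
    have hsmul := hxt.const_smul ((starRingEnd ℂ lam) - lam)
    have hcst : Filter.Tendsto
        (fun _ : ℕ => (Submodule.orthogonalProjection (defSubspace S (starRingEnd ℂ lam)) h : H))
        Filter.atTop
        (nhds ((Submodule.orthogonalProjection (defSubspace S (starRingEnd ℂ lam)) h : H))) :=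
      tendsto_const_nhds
    have := hcst.add hsmul
    simpa using this
  exact final.congr fun n => (keyfun n).symm
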